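/- If A ∈ 2^ω is 1-generic, then the many-one degree of A contains an infinite antichain of 1-degrees: there is a family (B_i)_{i∈ω} of subsets of ω with B_i ≡_m A for all i and B_i ≰_1 B_j for all i ≠ j. -/

import Mathlib

/-- The initial segment `X↾n` of `X ∈ 2^ω`, as a finite binary string. -/
def restrictN (X : ℕ → Bool) (n : ℕ) : List Bool := (List.range n).map X

/-- `X ∈ 2^ω` is 1-generic: for every c.e. set `W` of finite binary strings
there is `n` such that either `X↾n ∈ W`, or no extension of `X↾n` is in `W`. -/
def OneGeneric (X : ℕ → Bool) : Prop :=
  ∀ W : List Bool → Prop, REPred W →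
    ∃ n, W (restrictN X n) ∨ ∀ τ : List Bool, restrictN X n <+: τ → ¬ W τ

-- Lemma R: RePred of existential over computable bool test
theorem rePred_exists {q : List Bool → ℕ → Bool} (hq : Computable₂ q) :
    REPred fun σ => ∃ x, q σ x = true := by
  have hp : Partrec fun σ => Nat.rfind fun n => Part.some (q σ n) :=
    Partrec.rfind hq.partrec₂
  refine hp.dom_re.of_eq fun σ => ?_
  refine (Nat.rfind_dom (p := fun n => Part.some (q σ n))).trans ?_
  constructor
  · rintro ⟨n, hn, -⟩; exact ⟨n, by simpa using hn⟩
  · rintro ⟨n, hn⟩; exact ⟨n, by simpa using hn, fun _ => trivial⟩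

-- Lemma: eventually-constant functions are computable
theorem computable_of_eventually_const {β : Type} [Primcodable β] (f : ℕ → β) (c : β) (N : ℕ)
    (h : ∀ x, N ≤ x → f x = c) : Computable f := by
  have hl : Primrec fun x : ℕ => ((List.range N).map f).getD x c :=
    (Primrec.list_getD c).comp (Primrec.const _) Primrec.id
  refine hl.to_comp.of_eq fun x => ?_
  rcases lt_or_ge x N with hx | hx
  · rw [List.getD_eq_getElem _ _ (by simpa using hx)]
    simp
  · rw [List.getD_eq_default _ _ (by simpa using hx)]
    exact (h x hx).symm

theorem computable_of_eventually_id (f : ℕ → ℕ) (N : ℕ)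
    (h : ∀ x, N ≤ x → f x = x) : Computable f := by
  have hl : Primrec fun x : ℕ => (((List.range N).map f)[x]?).getD x :=
    Primrec.option_getD.comp ((Primrec.list_getElem?).comp (Primrec.const _) Primrec.id) Primrec.id
  refine hl.to_comp.of_eq fun x => ?_
  rcases lt_or_ge x N with hx | hx
  · rw [List.getElem?_eq_getElem (by simpa using hx)]
    simp
  · rw [List.getElem?_eq_none (by simpa using hx)]
    simp [h x hx]

theorem restrictN_length (X : ℕ → Bool) (n : ℕ) : (restrictN X n).length = n := by
  simp [restrictN]

theorem restrictN_getD (X : ℕ → Bool) {n k : ℕ} (h : k < n) :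
    (restrictN X n).getD k false = X k := by
  rw [restrictN, List.getD_eq_getElem _ _ (by simpa using h)]
  simp

theorem restrictN_prefix (X : ℕ → Bool) {a b : ℕ} (h : a ≤ b) :
    restrictN X a <+: restrictN X b := by
  rw [List.prefix_iff_eq_take, restrictN_length, restrictN, restrictN,
    ← List.map_take, List.take_range, min_eq_left h]

theorem restrictN_congr {X Y : ℕ → Bool} {n : ℕ} (h : ∀ k, k < n → X k = Y k) :
    restrictN X n = restrictN Y n := by
  unfold restrictN
  exact List.map_congr_left (by intro k hk; exact h k (List.mem_range.mp hk))

-- infinitely many trues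
theorem exists_true_ge (A : ℕ → Bool) (hA : OneGeneric A) (k : ℕ) :
    ∃ m, k ≤ m ∧ A m = true := by
  classical
  set q : List Bool → ℕ → Bool := fun σ m =>
    decide (k ≤ m) && (decide (m < σ.length) && σ.getD m false) with hqdef
  have hq : Computable₂ q := by
    apply Computable₂.mk
    have h1 : Primrec fun p : List Bool × ℕ => decide (k ≤ p.2) :=
      Primrec.nat_le.decide.comp (Primrec.const k) Primrec.snd
    have h2 : Primrec fun p : List Bool × ℕ => decide (p.2 < p.1.length) :=
      Primrec.nat_lt.decide.comp Primrec.snd (Primrec.list_length.comp Primrec.fst)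
    have h3 : Primrec fun p : List Bool × ℕ => p.1.getD p.2 false :=
      (Primrec.list_getD false).comp Primrec.fst Primrec.snd
    have hband : Primrec₂ (· && · : Bool → Bool → Bool) :=
      Primrec.dom_finite (fun p : Bool × Bool => p.1 && p.2)
    exact (hband.comp h1 (hband.comp h2 h3)).to_comp
  have hre : REPred fun σ => ∃ m, q σ m = true := rePred_exists hq
  rcases hA _ hre with ⟨n, hn | hn⟩
  · rcases hn with ⟨m, hm⟩
    simp only [hqdef, Bool.and_eq_true, decide_eq_true_eq] at hm
    obtain ⟨h1, h2, h3⟩ := hm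
    rw [restrictN_length] at h2
    exact ⟨m, h1, by rwa [restrictN_getD _ h2] at h3⟩
  · exfalso
    set Y : ℕ → Bool := fun m => if m < n then A m else true with hY
    have hpre : restrictN A n <+: restrictN Y (max n k + 1) := by
      have : restrictN A n = restrictN Y n := restrictN_congr (by intro m hm; simp [hY, hm])
      rw [this]
      exact restrictN_prefix Y (by omega)
    refine hn _ hpre ⟨max n k, ?_⟩
    have hlt : max n k < max n k + 1 := by omega
    simp only [hqdef, Bool.and_eq_true, decide_eq_true_eq]
    refine ⟨by omega, by rw [restrictN_length]; omega, ?_⟩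
    rw [restrictN_getD _ (by omega)]
    simp [hY]

-- exists a false
theorem exists_false_bit (A : ℕ → Bool) (hA : OneGeneric A) : ∃ m, A m = false := by
  classical
  set q : List Bool → ℕ → Bool := fun σ m =>
    decide (m < σ.length) && !(σ.getD m false) with hqdef
  have hq : Computable₂ q := by
    apply Computable₂.mk
    have h2 : Primrec fun p : List Bool × ℕ => decide (p.2 < p.1.length) :=
      Primrec.nat_lt.decide.comp Primrec.snd (Primrec.list_length.comp Primrec.fst)
    have h3 : Primrec fun p : List Bool × ℕ => !(p.1.getD p.2 false) :=
      (Primrec.dom_finite (fun b : Bool => !b)).comp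
        ((Primrec.list_getD false).comp Primrec.fst Primrec.snd)
    have hband : Primrec₂ (· && · : Bool → Bool → Bool) :=
      Primrec.dom_finite (fun p : Bool × Bool => p.1 && p.2)
    exact (hband.comp h2 h3).to_comp
  have hre : REPred fun σ => ∃ m, q σ m = true := rePred_exists hq
  rcases hA _ hre with ⟨n, hn | hn⟩
  · rcases hn with ⟨m, hm⟩
    simp only [hqdef, Bool.and_eq_true, decide_eq_true_eq, Bool.not_eq_true'] at hm
    rw [restrictN_length] at hm
    exact ⟨m, by rw [← restrictN_getD A hm.1]; exact hm.2⟩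
  · exfalso
    set Y : ℕ → Bool := fun m => if m < n then A m else false with hY
    have hpre : restrictN A n <+: restrictN Y (n + 1) := by
      have : restrictN A n = restrictN Y n := restrictN_congr (by intro m hm; simp [hY, hm])
      rw [this]; exact restrictN_prefix Y (by omega)
    refine hn _ hpre ⟨n, ?_⟩
    simp only [hqdef, Bool.and_eq_true, decide_eq_true_eq, Bool.not_eq_true']
    refine ⟨by rw [restrictN_length]; omega, ?_⟩
    rw [restrictN_getD _ (by omega)]
    simp [hY]

theorem main_force (A : ℕ → Bool) (hA : OneGeneric A) (F G : Finset ℕ)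
    (hF : ∀ x ∈ F, A x = true) (hG : ∀ x ∈ G, A x = true) (hcard : F.card ≠ G.card)
    (f : ℕ → ℕ) (hf : Computable f) (hinj : Function.Injective f)
    (hred : ∀ x, (A x = true ∧ x ∉ F) ↔ (A (f x) = true ∧ f x ∉ G)) : False := by
  classical
  -- computable characteristic functions of F and G
  have hcF : Computable fun x => decide (x ∈ F) := by
    refine computable_of_eventually_const _ false (F.sup id + 1) fun x hx => ?_
    simp only [decide_eq_false_iff_not]
    intro hmem
    have := Finset.le_sup (f := id) hmem
    simp only [id] at this; omega
  have hcG : Computable fun x => decide (x ∈ G) := by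
    refine computable_of_eventually_const _ false (G.sup id + 1) fun x hx => ?_
    simp only [decide_eq_false_iff_not]
    intro hmem
    have := Finset.le_sup (f := id) hmem
    simp only [id] at this; omega
  set q : List Bool → ℕ → Bool := fun σ x =>
    (decide (x < σ.length) && decide (f x < σ.length)) &&
      (((σ.getD x false) && !(decide (x ∈ F))) != ((σ.getD (f x) false) && !(decide (f x ∈ G))))
    with hqdef
  have hq : Computable₂ q := by
    apply Computable₂.mk
    have hband : Computable₂ (· && · : Bool → Bool → Bool) :=
      (Primrec.dom_finite (fun p : Bool × Bool => p.1 && p.2) : Primrec₂ _).to_comp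
    have hbne : Computable₂ (· != · : Bool → Bool → Bool) :=
      (Primrec.dom_finite (fun p : Bool × Bool => p.1 != p.2) : Primrec₂ _).to_comp
    have hbnot : Computable (! · : Bool → Bool) :=
      (Primrec.dom_finite (fun b : Bool => !b)).to_comp
    have hfx : Computable fun p : List Bool × ℕ => f p.2 := hf.comp Computable.snd
    have hlenp : Computable fun p : List Bool × ℕ => p.1.length :=
      (Primrec.list_length.comp Primrec.fst).to_comp
    have a1 : Computable fun p : List Bool × ℕ => decide (p.2 < p.1.length) :=
      (Primrec.nat_lt.decide.comp Primrec.snd (Primrec.list_length.comp Primrec.fst)).to_comp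
    have a2 : Computable fun p : List Bool × ℕ => decide (f p.2 < p.1.length) :=
      Computable₂.comp Primrec.nat_lt.decide.to_comp hfx hlenp
    have g1 : Computable fun p : List Bool × ℕ => p.1.getD p.2 false :=
      ((Primrec.list_getD false).comp Primrec.fst Primrec.snd).to_comp
    have hgetD : Computable₂ fun (l : List Bool) (n : ℕ) => l.getD n false :=
      (Primrec.list_getD false).to_comp
    have g2 : Computable fun p : List Bool × ℕ => p.1.getD (f p.2) false :=
      hgetD.comp Computable.fst hfx
    have m1 : Computable fun p : List Bool × ℕ => !(decide (p.2 ∈ F)) :=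
      hbnot.comp (hcF.comp Computable.snd)
    have m2 : Computable fun p : List Bool × ℕ => !(decide (f p.2 ∈ G)) :=
      hbnot.comp (hcG.comp hfx)
    exact (Computable₂.comp hband (Computable₂.comp hband a1 a2)
      (Computable₂.comp hbne (Computable₂.comp hband g1 m1)
        (Computable₂.comp hband g2 m2))).of_eq (fun p => rfl)
  rcases hA _ (rePred_exists hq) with ⟨n, hW | hforce⟩
  · -- a witness in W contradicts the reduction directly
    rcases hW with ⟨x, hx⟩
    simp only [hqdef, Bool.and_eq_true, decide_eq_true_eq, restrictN_length, bne_iff_ne] at hx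
    obtain ⟨⟨hx1, hx2⟩, hx3⟩ := hx
    rw [restrictN_getD A hx1, restrictN_getD A hx2] at hx3
    apply hx3
    by_cases h1 : A x = true ∧ x ∉ F
    · have h2 := (hred x).mp h1
      rw [h1.1, h2.1]
      simp [h1.2, h2.2]
    · have h2 : ¬(A (f x) = true ∧ f x ∉ G) := fun h => h1 ((hred x).mpr h)
      have e1 : (A x && !decide (x ∈ F)) = false := by
        rcases Bool.eq_false_or_eq_true (A x) with h | h
        · have : x ∈ F := by by_contra hc; exact h1 ⟨h, hc⟩
          simp [h, this]
        · simp [h]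
      have e2 : (A (f x) && !decide (f x ∈ G)) = false := by
        rcases Bool.eq_false_or_eq_true (A (f x)) with h | h
        · have : f x ∈ G := by by_contra hc; exact h2 ⟨h, hc⟩
          simp [h, this]
        · simp [h]
      rw [e1, e2]
  · -- forcing: f is the identity outside a finite set
    have hfix : ∀ x, n ≤ x → n ≤ f x → x ∉ F → f x ∉ G → f x = x := by
      intro x hxn hfxn hxF hfxG
      by_contra hne
      set Y : ℕ → Bool := fun m => if m = x then true else if m = f x then false else A m with hY
      set L := max x (f x) + 1 with hL
      have hpre : restrictN A n <+: restrictN Y L := by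
        have : restrictN A n = restrictN Y n := by
          refine restrictN_congr fun k hk => ?_
          have h1 : k ≠ x := by omega
          have h2 : k ≠ f x := by omega
          simp [hY, h1, h2]
        rw [this]; exact restrictN_prefix Y (by omega)
      refine hforce _ hpre ⟨x, ?_⟩
      simp only [hqdef, Bool.and_eq_true, decide_eq_true_eq, restrictN_length, bne_iff_ne]
      refine ⟨⟨by omega, by omega⟩, ?_⟩
      rw [restrictN_getD Y (by omega), restrictN_getD Y (by omega)]
      have hYx : Y x = true := by simp [hY]
      have hYfx : Y (f x) = false := by simp [hY, hne]
      rw [hYx, hYfx]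
      simp [hxF]
    -- the set where f is not the identity is finite
    set D : Set ℕ := {x | f x ≠ x} with hD
    have hDfin : D.Finite := by
      have hsub : D ⊆ ↑(Finset.range n) ∪ f ⁻¹' ↑(Finset.range n) ∪ ↑F ∪ f ⁻¹' ↑G := by
        intro x hx
        by_cases h1 : x < n
        · exact Or.inl (Or.inl (Or.inl (by simpa using h1)))
        by_cases h2 : f x < n
        · exact Or.inl (Or.inl (Or.inr (by simpa using h2)))
        by_cases h3 : x ∈ F
        · exact Or.inl (Or.inr h3)
        by_cases h4 : f x ∈ G
        · exact Or.inr h4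
        · exact absurd (hfix x (by omega) (by omega) h3 h4) hx
      refine Set.Finite.subset ?_ hsub
      have hpre1 : (f ⁻¹' ↑(Finset.range n)).Finite :=
        Set.Finite.preimage (hinj.injOn) (Finset.finite_toSet _)
      have hpre2 : (f ⁻¹' ↑G).Finite := Set.Finite.preimage (hinj.injOn) (Finset.finite_toSet _)
      exact (((Finset.finite_toSet _).union hpre1).union (Finset.finite_toSet F)).union hpre2
    set S : Finset ℕ := hDfin.toFinset ∪ F ∪ G with hS
    have hFS : F ⊆ S := by intro x hx; simp [hS, hx]
    have hGS : G ⊆ S := by intro x hx; simp [hS, hx]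
    have hmaps : ∀ x ∈ S, f x ∈ S := by
      intro x hx
      by_cases h : f x = x
      · rwa [h]
      · have h2 : f (f x) ≠ f x := fun hc => h (hinj hc)
        simp only [hS, Finset.mem_union, Set.Finite.mem_toFinset, hD, Set.mem_setOf_eq]
        tauto
    have himg : S.image f = S := by
      apply Finset.eq_of_subset_of_card_le
      · intro y hy
        rcases Finset.mem_image.mp hy with ⟨x, hx, rfl⟩
        exact hmaps x hx
      · rw [Finset.card_image_of_injective S hinj]
    set b : ℕ → ℤ := fun x => if A x = true ∧ x ∉ F then 1 else 0 with hb
    set b' : ℕ → ℤ := fun x => if A x = true ∧ x ∉ G then 1 else 0 with hb'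
    have hsum : ∑ x ∈ S, b x = ∑ x ∈ S, b' x := by
      calc ∑ x ∈ S, b x = ∑ x ∈ S, b' (f x) := by
            refine Finset.sum_congr rfl fun x _ => ?_
            simp only [hb, hb']
            by_cases h : A x = true ∧ x ∉ F
            · rw [if_pos h, if_pos ((hred x).mp h)]
            · rw [if_neg h, if_neg (fun hc => h ((hred x).mpr hc))]
        _ = ∑ y ∈ S.image f, b' y := (Finset.sum_image (fun a _ c _ h => hinj h)).symm
        _ = ∑ y ∈ S, b' y := by rw [himg]
    have hdiff : ∀ x, b x - b' x =
        (if x ∈ G \ F then (1:ℤ) else 0) - (if x ∈ F \ G then (1:ℤ) else 0) := by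
      intro x
      simp only [hb, hb', Finset.mem_sdiff]
      by_cases hxF : x ∈ F
      · have hAx := hF x hxF
        by_cases hxG : x ∈ G
        · simp [hxF, hxG]
        · simp [hxF, hxG, hAx]
      · by_cases hxG : x ∈ G
        · have hAx := hG x hxG
          simp [hxF, hxG, hAx]
        · simp [hxF, hxG]
    have hcards : ((G \ F).card : ℤ) = ((F \ G).card : ℤ) := by
      have h0 : ∑ x ∈ S, (b x - b' x) = 0 := by rw [Finset.sum_sub_distrib, hsum, sub_self]
      rw [Finset.sum_congr rfl (fun x _ => hdiff x), Finset.sum_sub_distrib] at h0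
      have e1 : ∑ x ∈ S, (if x ∈ G \ F then (1:ℤ) else 0) = (G \ F).card := by
        rw [Finset.sum_ite_mem, Finset.inter_eq_right.mpr
          (Finset.Subset.trans (Finset.sdiff_subset) hGS)]
        simp
      have e2 : ∑ x ∈ S, (if x ∈ F \ G then (1:ℤ) else 0) = (F \ G).card := by
        rw [Finset.sum_ite_mem, Finset.inter_eq_right.mpr
          (Finset.Subset.trans (Finset.sdiff_subset) hFS)]
        simp
      rw [e1, e2] at h0
      linarith
    apply hcard
    have h1 := Finset.card_sdiff_add_card_inter F G
    have h2 := Finset.card_sdiff_add_card_inter G F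
    rw [Finset.inter_comm] at h2
    have : (G \ F).card = (F \ G).card := by exact_mod_cast hcards
    omega

theorem stmt_19' (A : ℕ → Bool) (hA : OneGeneric A) :
    ∃ B : ℕ → Set ℕ,
      (∀ i, ManyOneEquiv (· ∈ B i) (fun n => A n = true)) ∧
      (∀ i j, i ≠ j → ¬ OneOneReducible (· ∈ B i) (· ∈ B j)) := by
  classical
  set T : Set ℕ := {m | A m = true} with hT
  have hTinf : T.Infinite := by
    apply Set.infinite_of_not_bddAbove
    rintro ⟨b, hb⟩
    obtain ⟨m, hm1, hm2⟩ := exists_true_ge A hA (b + 1)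
    have : m ≤ b := hb hm2
    omega
  set e : ℕ ↪ T := hTinf.natEmbedding T with he
  have hev : Function.Injective fun k => (e k : ℕ) :=
    fun a b h => e.injective (Subtype.ext h)
  set F : ℕ → Finset ℕ := fun i => (Finset.range i).image fun k => (e k : ℕ) with hFdef
  have hFcard : ∀ i, (F i).card = i := by
    intro i
    rw [hFdef]
    rw [Finset.card_image_of_injective _ hev, Finset.card_range]
  have hFA : ∀ i, ∀ x ∈ F i, A x = true := by
    intro i x hx
    rcases Finset.mem_image.mp hx with ⟨k, -, rfl⟩
    exact (e k).2
  have hFbound : ∀ i x, (F i).sup id + 1 ≤ x → x ∉ F i := by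
    intro i x hx hmem
    have := Finset.le_sup (f := id) hmem
    simp only [id] at this; omega
  refine ⟨fun i => {x | A x = true ∧ x ∉ F i}, fun i => ?_, fun i j hij hle => ?_⟩
  · constructor
    · -- B i ≤m A
      obtain ⟨n₀, hn₀⟩ := exists_false_bit A hA
      refine ⟨fun x => if x ∈ F i then n₀ else x, ?_, ?_⟩
      · refine computable_of_eventually_id _ ((F i).sup id + 1) fun x hx => ?_
        rw [if_neg (hFbound i x hx)]
      · intro x
        by_cases hx : x ∈ F i
        · simp only [Set.mem_setOf_eq, hx, if_pos, hn₀]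
          simp [hn₀]
        · simp [Set.mem_setOf_eq, hx]
    · -- A ≤m B i
      obtain ⟨m₀, hm₀⟩ := (hTinf.diff (F i).finite_toSet).nonempty
      rcases hm₀ with ⟨hm₀T, hm₀F⟩
      refine ⟨fun x => if x ∈ F i then m₀ else x, ?_, ?_⟩
      · refine computable_of_eventually_id _ ((F i).sup id + 1) fun x hx => ?_
        rw [if_neg (hFbound i x hx)]
      · intro x
        by_cases hx : x ∈ F i
        · simp only [hx, if_pos]
          have : A x = true := hFA i x hx
          simp only [this, true_iff, Set.mem_setOf_eq]
          exact ⟨hm₀T, by simpa using hm₀F⟩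
        · simp [Set.mem_setOf_eq, hx]
  · rcases hle with ⟨f, hfc, hfinj, hspec⟩
    refine main_force A hA (F i) (F j) (hFA i) (hFA j) ?_ f hfc hfinj ?_
    · rw [hFcard, hFcard]; exact hij
    · intro x; exact hspec x

/-- If `A` is 1-generic, then the many-one degree of `A` contains an infinite
antichain of 1-degrees. -/
theorem stmt_19 (A : ℕ → Bool) (hA : OneGeneric A) :
    ∃ B : ℕ → Set ℕ,
      (∀ i, ManyOneEquiv (· ∈ B i) (fun n => A n = true)) ∧
      (∀ i j, i ≠ j → ¬ OneOneReducible (· ∈ B i) (· ∈ B j)) :=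
  stmt_19' A hA
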